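/- arXiv:1710.05033 — 3 statements merged into one kernel-verified Lean document; each statement's English description precedes it below -/
import Mathlib

section
/- Let d ≥ 1 and n ≥ 1 be natural numbers, let π₀ and π₁ be complex d×d matrices that are orthogonal projections (Hermitian and idempotent) satisfying π₀ + π₁ = I, and let ψ ∈ ℂ^d be a unit vector. Fix a natural number k ≤ n and let Π = Σ_{b ∈ {0,1}^n, Σᵢ bᵢ = n−k} π_{b₁} ⊗ ⋯ ⊗ π_{bₙ} be the sum of the n-fold Kronecker products of the projections over all binary strings b of length n with exactly n−k ones. Then ⟨ψ^{⊗n}, Π ψ^{⊗n}⟩ ≤ exp(−2·n·(⟨ψ, π₀ ψ⟩ − k/n)²). -/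
open Matrix ComplexOrder

lemma bernoulli_mgf_bound (q : ℝ) (hq0 : 0 ≤ q) (hq1 : q ≤ 1) (x : ℝ) :
    (1 - q) + q * Real.exp x ≤ Real.exp (q * x + x ^ 2 / 8) := by
  set p := 1 - q with hp
  have hp0 : 0 ≤ p := by simp [hp]; linarith
  set g : ℝ → ℝ := fun y => p + q * Real.exp y with hg
  have hgpos : ∀ y, 0 < g y := by
    intro y
    rcases eq_or_lt_of_le hq0 with h | h
    · simp [hg, ← h, hp]
    · have := Real.exp_pos y
      have : 0 < q * Real.exp y := by positivity
      simp only [hg]; linarith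
  set F : ℝ → ℝ := fun y => q * y + y ^ 2 / 8 - Real.log (g y) with hF
  set F' : ℝ → ℝ := fun y => q + y / 4 - q * Real.exp y / g y with hF'
  have hgd : ∀ y, HasDerivAt g (q * Real.exp y) y := fun y =>
    ((Real.hasDerivAt_exp y).const_mul q).const_add p
  have hFd : ∀ y, HasDerivAt F (F' y) y := by
    intro y
    have h1 : HasDerivAt (fun y : ℝ => q * y) q y := (hasDerivAt_id y).const_mul q |>.congr_deriv (by ring)
    have h2 : HasDerivAt (fun y : ℝ => y ^ 2 / 8) (y / 4) y := by
      have := (hasDerivAt_pow 2 y).div_const 8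
      exact this.congr_deriv (by rw [show (2:ℕ) - 1 = 1 from rfl, pow_one]; push_cast; ring)
    have h3 : HasDerivAt (fun y => Real.log (g y)) (q * Real.exp y / g y) y :=
      (hgd y).log (hgpos y).ne'
    exact (h1.add h2).sub h3
  have hF'd : ∀ y, HasDerivAt F' (1 / 4 - p * q * Real.exp y / (g y) ^ 2) y := by
    intro y
    have h2 : HasDerivAt (fun y : ℝ => q + y / 4) (1 / 4) y := by
      simpa using ((hasDerivAt_id y).div_const 4).const_add q
    have h3 : HasDerivAt (fun y => q * Real.exp y / g y)
        ((q * Real.exp y * g y - q * Real.exp y * (q * Real.exp y)) / (g y) ^ 2) y :=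
      ((Real.hasDerivAt_exp y).const_mul q).div (hgd y) (hgpos y).ne'
    have := h2.sub h3
    refine this.congr_deriv ?_
    have hgy := (hgpos y).ne'
    rw [sub_right_inj]; congr 1
    simp only [hg]
    ring
  have hF''nn : ∀ y, 0 ≤ 1 / 4 - p * q * Real.exp y / (g y) ^ 2 := by
    intro y
    have hgy := hgpos y
    have key : p * q * Real.exp y ≤ 1 / 4 * (g y) ^ 2 := by
      have habs : ∀ a b : ℝ, a * b ≤ 1 / 4 * (a + b) ^ 2 := fun a b => by nlinarith [sq_nonneg (a - b)]
      have := habs p (q * Real.exp y)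
      simp only [hg]; linarith [this.trans_eq (by ring : 1/4*(p + q*Real.exp y)^2 = 1/4*(p + q*Real.exp y)^2)]
    have h2 : p * q * Real.exp y / (g y) ^ 2 ≤ 1 / 4 :=
      (div_le_iff₀ (by positivity)).mpr key
    linarith
  -- F' is monotone
  have hmono : Monotone F' := by
    apply monotone_of_deriv_nonneg (fun y => (hF'd y).differentiableAt)
    intro y
    rw [(hF'd y).deriv]
    exact hF''nn y
  have hg0 : g 0 = 1 := by simp [hg, hp]
  have hF'0 : F' 0 = 0 := by simp [hF', hg0]
  have hF0 : F 0 = 0 := by simp [hF, hg0]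
  have hFnonneg : ∀ y, 0 ≤ F y := by
    intro y
    rcases le_total 0 y with h | h
    · have hmon : MonotoneOn F (Set.Ici 0) := by
        apply monotoneOn_of_deriv_nonneg (convex_Ici 0)
          (Differentiable.continuous (fun z => (hFd z).differentiableAt)).continuousOn
          (fun z _ => (hFd z).differentiableAt.differentiableWithinAt)
        intro z hz
        rw [(hFd z).deriv]
        rw [interior_Ici] at hz
        have : F' 0 ≤ F' z := hmono (le_of_lt hz)
        linarith [hF'0 ▸ this]
      have := hmon (Set.self_mem_Ici) (Set.mem_Ici.mpr h) h
      linarith [hF0 ▸ this]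
    · have hant : AntitoneOn F (Set.Iic 0) := by
        apply antitoneOn_of_deriv_nonpos (convex_Iic 0)
          (Differentiable.continuous (fun z => (hFd z).differentiableAt)).continuousOn
          (fun z _ => (hFd z).differentiableAt.differentiableWithinAt)
        intro z hz
        rw [(hFd z).deriv]
        rw [interior_Iic] at hz
        have : F' z ≤ F' 0 := hmono (le_of_lt hz)
        linarith [hF'0 ▸ this]
      have := hant (Set.mem_Iic.mpr h) (Set.self_mem_Iic) h
      linarith [hF0 ▸ this]
  have := hFnonneg x
  simp only [hF] at this
  have hlog : Real.log (g x) ≤ q * x + x ^ 2 / 8 := by linarith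
  have := Real.exp_le_exp.mpr hlog
  rwa [Real.exp_log (hgpos x)] at this

lemma binomial_term_bound (n m : ℕ) (hn : 1 ≤ n) (hm : m ≤ n)
    (q : ℝ) (hq0 : 0 ≤ q) (hq1 : q ≤ 1) :
    (n.choose m : ℝ) * q ^ m * (1 - q) ^ (n - m) ≤
      Real.exp (-2 * n * ((m : ℝ) / n - q) ^ 2) := by
  set p := 1 - q with hp
  have hp0 : 0 ≤ p := by simp [hp]; linarith
  have hnpos : (0:ℝ) < n := by exact_mod_cast hn
  set a : ℝ := (m : ℝ) / n with ha
  set L : ℝ := 4 * (a - q) with hL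
  -- single term ≤ full binomial sum
  have key : (n.choose m : ℝ) * q ^ m * p ^ (n - m) * Real.exp (L * m) ≤
      (p + q * Real.exp L) ^ n := by
    have hexp := add_pow (q * Real.exp L) p n
    have hmem : m ∈ Finset.range (n + 1) := Finset.mem_range.mpr (Nat.lt_succ_of_le hm)
    have hterm : ∀ j ∈ Finset.range (n+1),
        0 ≤ (q * Real.exp L) ^ j * p ^ (n - j) * (n.choose j : ℝ) := by
      intro j _; positivity
    have hsingle := Finset.single_le_sum hterm hmem
    calc (n.choose m : ℝ) * q ^ m * p ^ (n - m) * Real.exp (L * m)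
        = (q * Real.exp L) ^ m * p ^ (n - m) * (n.choose m : ℝ) := by
          rw [mul_pow, ← Real.exp_nat_mul]; ring
      _ ≤ ∑ j ∈ Finset.range (n+1), (q * Real.exp L) ^ j * p ^ (n - j) * (n.choose j : ℝ) := hsingle
      _ = (q * Real.exp L + p) ^ n := (add_pow _ _ _).symm
      _ = (p + q * Real.exp L) ^ n := by ring
  have hmgf : (p + q * Real.exp L) ^ n ≤ Real.exp (n * (q * L + L ^ 2 / 8)) := by
    have h1 : (p + q * Real.exp L) ≤ Real.exp (q * L + L ^ 2 / 8) :=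
      bernoulli_mgf_bound q hq0 hq1 L
    have h2 : (p + q * Real.exp L) ^ n ≤ (Real.exp (q * L + L ^ 2 / 8)) ^ n :=
      pow_le_pow_left₀ (by positivity) h1 n
    rwa [← Real.exp_nat_mul] at h2
  have hchain : (n.choose m : ℝ) * q ^ m * p ^ (n - m) * Real.exp (L * m) ≤
      Real.exp (n * (q * L + L ^ 2 / 8)) := key.trans hmgf
  have hE : (0:ℝ) < Real.exp (L * m) := Real.exp_pos _
  have hdiv : (n.choose m : ℝ) * q ^ m * p ^ (n - m) ≤
      Real.exp (n * (q * L + L ^ 2 / 8)) / Real.exp (L * m) := by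
    rw [le_div_iff₀ hE]; exact hchain
  have hma : (m : ℝ) = a * n := by rw [ha]; field_simp
  have hexpeq : Real.exp (n * (q * L + L ^ 2 / 8)) / Real.exp (L * m) =
      Real.exp (-2 * n * (a - q) ^ 2) := by
    rw [← Real.exp_sub]
    congr 1
    rw [hma, hL]; ring
  rw [hexpeq] at hdiv
  exact hdiv


lemma quad_form_prod (d n : ℕ) (A : Fin n → Matrix (Fin d) (Fin d) ℂ) (ψ : Fin d → ℂ) :
    star (fun x : Fin n → Fin d => ∏ i, ψ (x i)) ⬝ᵥ
      (Matrix.of fun x y : Fin n → Fin d => ∏ i, A i (x i) (y i)).mulVec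
        (fun x => ∏ i, ψ (x i))
    = ∏ i, (star ψ ⬝ᵥ (A i).mulVec ψ) := by
  classical
  set h : Fin n → Fin d × Fin d → ℂ := fun i z => star (ψ z.1) * A i z.1 z.2 * ψ z.2 with hh
  have rhs_eq : ∏ i, (star ψ ⬝ᵥ (A i).mulVec ψ)
      = ∑ w : Fin n → Fin d × Fin d, ∏ i, h i (w i) := by
    have step : ∀ i, star ψ ⬝ᵥ (A i).mulVec ψ = ∑ z : Fin d × Fin d, h i z := by
      intro i
      simp only [dotProduct, Matrix.mulVec, hh, Fintype.sum_prod_type,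
        Finset.mul_sum, Pi.star_apply]
      exact Finset.sum_congr rfl fun a _ => Finset.sum_congr rfl fun b _ => by ring
    rw [Finset.prod_congr rfl fun i _ => step i]
    rw [Finset.prod_univ_sum]
    rw [Fintype.piFinset_univ]
  have lhs_eq : star (fun x : Fin n → Fin d => ∏ i, ψ (x i)) ⬝ᵥ
      (Matrix.of fun x y : Fin n → Fin d => ∏ i, A i (x i) (y i)).mulVec
        (fun x => ∏ i, ψ (x i))
      = ∑ x : Fin n → Fin d, ∑ y : Fin n → Fin d, ∏ i, h i (x i, y i) := by
    simp only [dotProduct, Matrix.mulVec, Matrix.of_apply, Pi.star_apply,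
      star_prod, Finset.mul_sum]
    refine Finset.sum_congr rfl fun x _ => Finset.sum_congr rfl fun y _ => ?_
    simp only [hh]
    rw [← Finset.prod_mul_distrib, ← Finset.prod_mul_distrib]
    exact Finset.prod_congr rfl fun i _ => by ring
  rw [lhs_eq, rhs_eq]
  rw [← Fintype.sum_prod_type']
  apply Fintype.sum_equiv (Equiv.arrowProdEquivProdArrow (Fin n) (fun _ => Fin d) (fun _ => Fin d)).symm
  intro z
  simp [Equiv.arrowProdEquivProdArrow]


lemma fin2_val_ite (j : Fin 2) : (j : ℕ) = if j = 1 then 1 else 0 := by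
  fin_cases j <;> simp

lemma sum_prod_binary (n r : ℕ) (c : Fin 2 → ℂ) :
    ∑ b ∈ Finset.univ.filter (fun b : Fin n → Fin 2 => ∑ i, (b i : ℕ) = r),
      ∏ i, c (b i) = (n.choose r : ℂ) * c 0 ^ (n - r) * c 1 ^ r := by
  classical
  have hcard_ones : ∀ b : Fin n → Fin 2,
      ∑ i, ((b i : ℕ)) = (Finset.univ.filter (fun i => b i = 1)).card := by
    intro b
    rw [Finset.card_filter]
    exact Finset.sum_congr rfl fun i _ => fin2_val_ite (b i)
  -- value of each term
  have hterm : ∀ b : Fin n → Fin 2, (∑ i, ((b i : ℕ))) = r →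
      ∏ i, c (b i) = c 0 ^ (n - r) * c 1 ^ r := by
    intro b hb
    have hS : (Finset.univ.filter (fun i => b i = 1)).card = r := by
      rw [← hcard_ones b]; exact hb
    have hSc : (Finset.univ.filter (fun i => ¬ b i = 1)).card = n - r := by
      have := Finset.card_filter_add_card_filter_not
        (s := (Finset.univ : Finset (Fin n))) (p := fun i => b i = 1)
      simp only [Finset.card_univ, Fintype.card_fin] at this
      omega
    rw [← Finset.prod_filter_mul_prod_filter_not Finset.univ (fun i => b i = 1)]
    have h1 : ∏ i ∈ Finset.univ.filter (fun i => b i = 1), c (b i) = c 1 ^ r := by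
      rw [Finset.prod_congr rfl (fun i hi => by
        rw [(Finset.mem_filter.mp hi).2]), Finset.prod_const, hS]
    have h0 : ∏ i ∈ Finset.univ.filter (fun i => ¬ b i = 1), c (b i) = c 0 ^ (n - r) := by
      rw [Finset.prod_congr rfl (fun i hi => by
        have h2 := (Finset.mem_filter.mp hi).2
        have : b i = 0 := by omega
        rw [this]), Finset.prod_const, hSc]
    rw [h1, h0]; ring
  rw [Finset.sum_congr rfl fun b hb => hterm b (Finset.mem_filter.mp hb).2]
  rw [Finset.sum_const]
  have hcount : (Finset.univ.filter
      (fun b : Fin n → Fin 2 => ∑ i, ((b i : ℕ)) = r)).card = n.choose r := by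
    have hpc : (Finset.powersetCard r (Finset.univ : Finset (Fin n))).card = n.choose r := by
      rw [Finset.card_powersetCard]; simp
    rw [← hpc]
    · apply Finset.card_bij (fun b _ => Finset.univ.filter (fun i => b i = 1))
      · intro b hb
        rw [Finset.mem_powersetCard]
        refine ⟨Finset.filter_subset _ _, ?_⟩
        rw [← hcard_ones b]
        exact (Finset.mem_filter.mp hb).2
      · intro b1 h1 b2 h2 heq
        funext i
        have : (i ∈ Finset.univ.filter (fun i => b1 i = 1)) ↔
            (i ∈ Finset.univ.filter (fun i => b2 i = 1)) := by rw [heq]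
        simp only [Finset.mem_filter, Finset.mem_univ, true_and] at this
        have v1 := (b1 i).isLt
        have v2 := (b2 i).isLt
        have e1 : b1 i = 1 ↔ (b1 i : ℕ) = 1 := by omega
        have e2 : b2 i = 1 ↔ (b2 i : ℕ) = 1 := by omega
        rw [e1, e2] at this
        omega
      · intro s hs
        rw [Finset.mem_powersetCard] at hs
        refine ⟨fun i => if i ∈ s then 1 else 0, ?_, ?_⟩
        · rw [Finset.mem_filter]
          refine ⟨Finset.mem_univ _, ?_⟩
          rw [hcard_ones, ← hs.2]
          congr 1
          ext i
          simp only [Finset.mem_filter, Finset.mem_univ, true_and]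
          by_cases h : i ∈ s <;> simp [h]
        · ext i
          simp only [Finset.mem_filter, Finset.mem_univ, true_and]
          by_cases h : i ∈ s <;> simp [h]
  rw [hcount]
  push_cast
  ring


lemma sum_mulVec' {n d : ℕ} (s : Finset (Fin n → Fin 2))
    (M : (Fin n → Fin 2) → Matrix (Fin n → Fin d) (Fin n → Fin d) ℂ) (v : (Fin n → Fin d) → ℂ) :
    (∑ b ∈ s, M b).mulVec v = ∑ b ∈ s, (M b).mulVec v := by
  ext x
  simp only [Matrix.mulVec, dotProduct, Finset.sum_apply, Matrix.sum_apply,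
    Finset.sum_mul]
  rw [Finset.sum_comm]

lemma dotProduct_sum' {I J : Type*} [Fintype I] (u : I → ℂ) (s : Finset J)
    (f : J → I → ℂ) : u ⬝ᵥ (∑ b ∈ s, f b) = ∑ b ∈ s, u ⬝ᵥ f b := by
  simp only [dotProduct, Finset.sum_apply, Finset.mul_sum]
  rw [Finset.sum_comm]


open Matrix ComplexOrder

/-- For orthogonal projections `π₀, π₁` on `ℂ^d` with `π₀ + π₁ = 1`, a
unit vector `ψ ∈ ℂ^d`, and `k ≤ n`, the sum `Π` of the `n`-fold Kronecker products
`π_{b₁} ⊗ ⋯ ⊗ π_{bₙ}` over binary strings `b` with exactly `n − k` ones satisfies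
`⟨ψ^{⊗n}, Π ψ^{⊗n}⟩ ≤ exp(−2·n·(⟨ψ, π₀ ψ⟩ − k/n)²)`. -/
theorem tensor_power_typicality_bound
    (d n : ℕ) (hd : 1 ≤ d) (hn : 1 ≤ n)
    (π₀ π₁ : Matrix (Fin d) (Fin d) ℂ)
    (hπ₀herm : π₀.IsHermitian) (hπ₀idem : π₀ * π₀ = π₀)
    (hπ₁herm : π₁.IsHermitian) (hπ₁idem : π₁ * π₁ = π₁)
    (hsum : π₀ + π₁ = 1)
    (ψ : Fin d → ℂ) (hψ : star ψ ⬝ᵥ ψ = 1)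
    (k : ℕ) (hk : k ≤ n)
    (Pi : Matrix (Fin n → Fin d) (Fin n → Fin d) ℂ)
    (hPi : Pi = ∑ b ∈ Finset.univ.filter (fun b : Fin n → Fin 2 => ∑ i, (b i : ℕ) = n - k),
      Matrix.of (fun x y : Fin n → Fin d => ∏ i, (![π₀, π₁] (b i)) (x i) (y i)))
    (Ψ : (Fin n → Fin d) → ℂ) (hΨ : Ψ = fun x => ∏ i, ψ (x i)) :
    star Ψ ⬝ᵥ Pi.mulVec Ψ ≤
      (Real.exp (-2 * n * ((star ψ ⬝ᵥ π₀.mulVec ψ).re - (k : ℝ) / n) ^ 2) : ℂ) := by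
  classical
  -- constants of the quadratic form
  set c : Fin 2 → ℂ := fun j => star ψ ⬝ᵥ (![π₀, π₁] j).mulVec ψ with hc
  -- each c j is nonneg real
  have hreal : ∀ (π : Matrix (Fin d) (Fin d) ℂ), π.IsHermitian → π * π = π →
      0 ≤ star ψ ⬝ᵥ π.mulVec ψ := by
    intro π hherm hidem
    have h1 : star ψ ⬝ᵥ π.mulVec ψ = star (π.mulVec ψ) ⬝ᵥ (π.mulVec ψ) := by
      conv_lhs => rw [← hidem, ← Matrix.mulVec_mulVec, Matrix.dotProduct_mulVec]
      rw [Matrix.star_mulVec, hherm.eq]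
    rw [h1]
    exact dotProduct_star_self_nonneg _
  have hc0 : 0 ≤ c 0 := hreal π₀ hπ₀herm hπ₀idem
  have hc1 : 0 ≤ c 1 := hreal π₁ hπ₁herm hπ₁idem
  have hcsum : c 0 + c 1 = 1 := by
    simp only [hc]
    show star ψ ⬝ᵥ π₀.mulVec ψ + star ψ ⬝ᵥ π₁.mulVec ψ = 1
    rw [← dotProduct_add, ← Matrix.add_mulVec, hsum, Matrix.one_mulVec]
    exact hψ
  set p : ℝ := (c 0).re with hpdef
  have hc0im : (c 0).im = 0 := by
    have := hc0; rw [Complex.le_def] at this; simpa using this.2.symm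
  have hc0eq : c 0 = (p : ℂ) := by
    apply Complex.ext <;> simp [hpdef, hc0im]
  have hc1eq : c 1 = ((1 - p : ℝ) : ℂ) := by
    have : c 1 = 1 - c 0 := by linear_combination hcsum
    rw [this, hc0eq]; push_cast; ring
  have hp0 : 0 ≤ p := by
    have := hc0; rw [Complex.le_def] at this; simpa [hpdef] using this.1
  have hp1 : p ≤ 1 := by
    have := hc1; rw [Complex.le_def, hc1eq] at this
    have h := this.1; simp at h; linarith
  -- the quadratic form value
  have hlhs : star Ψ ⬝ᵥ Pi.mulVec Ψ =
      ((n.choose (n - k) : ℝ) * p ^ k * (1 - p) ^ (n - k) : ℝ) := by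
    rw [hPi, hΨ, sum_mulVec', dotProduct_sum']
    have hterm : ∀ b : Fin n → Fin 2,
        star (fun x : Fin n → Fin d => ∏ i, ψ (x i)) ⬝ᵥ
          (Matrix.of fun x y : Fin n → Fin d =>
            ∏ i, (![π₀, π₁] (b i)) (x i) (y i)).mulVec (fun x => ∏ i, ψ (x i))
        = ∏ i, c (b i) := fun b =>
      quad_form_prod d n (fun i => ![π₀, π₁] (b i)) ψ
    rw [Finset.sum_congr rfl fun b _ => hterm b]
    rw [sum_prod_binary n (n - k) c]
    rw [hc0eq, hc1eq]
    have hnk : n - (n - k) = k := by omega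
    rw [hnk]
    push_cast
    ring
  rw [hlhs]
  rw [Complex.real_le_real]
  have hbound := binomial_term_bound n (n - k) hn (Nat.sub_le n k)
    (1 - p) (by linarith) (by linarith)
  have hq : (1 : ℝ) - (1 - p) = p := by ring
  rw [hq] at hbound
  have hnk2 : n - (n - k) = k := by omega
  rw [hnk2] at hbound
  have hexpeq : ((n - k : ℕ) : ℝ) / n - (1 - p) = p - k / n := by
    have hnpos : (0:ℝ) < n := by exact_mod_cast hn
    rw [Nat.cast_sub hk]
    field_simp
    ring
  calc (n.choose (n - k) : ℝ) * p ^ k * (1 - p) ^ (n - k)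
      = (n.choose (n - k) : ℝ) * (1 - p) ^ (n - k) * p ^ k := by ring
    _ ≤ Real.exp (-2 * n * (((n - k : ℕ) : ℝ) / n - (1 - p)) ^ 2) := hbound
    _ = Real.exp (-2 * n * ((star ψ ⬝ᵥ π₀.mulVec ψ).re - (k : ℝ) / n) ^ 2) := by
        congr 1
        rw [hexpeq]
        have hre : (star ψ ⬝ᵥ π₀.mulVec ψ).re = p := by simp [hpdef, hc]
        rw [hre]
end

section
/- For every real number p with 0 ≤ p ≤ 1 and all natural numbers n ≥ 1 and k ≤ n, one has C(n,k) · p^k · (1−p)^{n−k} ≤ exp(−2·n·(p − k/n)²). -/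
open Real Set


/-- derivative helper: φ t = log t - log (1-t) - 4 t is monotone on (0,1) -/
lemma phi_mono : MonotoneOn (fun t : ℝ => Real.log t - Real.log (1 - t) - 4 * t) (Ioo (0:ℝ) 1) := by
  have hderiv : ∀ x ∈ Ioo (0:ℝ) 1, HasDerivAt (fun t : ℝ => Real.log t - Real.log (1 - t) - 4 * t)
      (1/x - (-1)/(1-x) - 4) x := by
    intro x hx
    have hx0 : x ≠ 0 := ne_of_gt hx.1
    have hx1 : (1:ℝ) - x ≠ 0 := by have := hx.2; intro h; nlinarith
    have h1 : HasDerivAt Real.log (1/x) x := by simpa [one_div] using Real.hasDerivAt_log hx0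
    have h2 : HasDerivAt (fun t : ℝ => Real.log (1 - t)) ((-1)/(1-x)) x := by
      have hlin : HasDerivAt (fun t : ℝ => 1 - t) (-1) x := by
        simpa using (hasDerivAt_id x).const_sub 1
      have := (Real.hasDerivAt_log hx1).comp x hlin
      simpa [div_eq_mul_inv, mul_comm, Function.comp_def] using this
    have h3 : HasDerivAt (fun t : ℝ => 4 * t) 4 x := by
      simpa using (hasDerivAt_id x).const_mul 4
    exact (h1.sub h2).sub h3
  apply monotoneOn_of_deriv_nonneg (convex_Ioo 0 1)
  · exact fun x hx => ((hderiv x hx).differentiableAt.continuousAt).continuousWithinAt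
  · intro x hx
    rw [interior_Ioo] at hx
    exact ((hderiv x hx).differentiableAt).differentiableWithinAt
  · intro x hx
    rw [interior_Ioo] at hx
    rw [(hderiv x hx).deriv]
    have h0 : 0 < x := hx.1
    have h1 : x < 1 := hx.2
    rw [div_sub_div _ _ (ne_of_gt h0) (by nlinarith : (1:ℝ) - x ≠ 0)]
    have hpos : 0 < x * (1 - x) := by nlinarith
    rw [sub_nonneg, le_div_iff₀ hpos]
    nlinarith [sq_nonneg (2*x - 1)]

lemma pinsker (p : ℝ) (hp0 : 0 < p) (hp1 : p < 1) (t : ℝ) (ht0 : 0 ≤ t) (ht1 : t ≤ 1) :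
    2 * (t - p) ^ 2 ≤
      t * Real.log t + (1 - t) * Real.log (1 - t) - t * Real.log p - (1 - t) * Real.log (1 - p) := by
  set g : ℝ → ℝ := fun t => t * Real.log t + (1 - t) * Real.log (1 - t) - t * Real.log p
      - (1 - t) * Real.log (1 - p) - 2 * (t - p) ^ 2 with hg
  have hgp : g p = 0 := by simp [hg]
  have hcont : Continuous g := by
    have h1 : Continuous fun t : ℝ => t * Real.log t := Real.continuous_mul_log
    have h2 : Continuous fun t : ℝ => (1 - t) * Real.log (1 - t) :=
      h1.comp (continuous_const.sub continuous_id)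
    fun_prop (disch := skip)
  have hderiv : ∀ x ∈ Ioo (0:ℝ) 1, HasDerivAt g
      ((Real.log x - Real.log (1 - x) - 4 * x) - (Real.log p - Real.log (1 - p) - 4 * p)) x := by
    intro x hx
    have hx0 : x ≠ 0 := ne_of_gt hx.1
    have hx1 : (1:ℝ) - x ≠ 0 := by have := hx.2; intro h; nlinarith
    have h1 : HasDerivAt (fun t : ℝ => t * Real.log t) (Real.log x + 1) x :=
      Real.hasDerivAt_mul_log hx0
    have hlin : HasDerivAt (fun t : ℝ => 1 - t) (-1) x := by
      simpa using (hasDerivAt_id x).const_sub 1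
    have h2 : HasDerivAt (fun t : ℝ => (1 - t) * Real.log (1 - t))
        ((Real.log (1 - x) + 1) * (-1)) x :=
      (Real.hasDerivAt_mul_log hx1).comp x hlin
    have h3 : HasDerivAt (fun t : ℝ => t * Real.log p) (Real.log p) x := by
      simpa using (hasDerivAt_id x).mul_const (Real.log p)
    have h4 : HasDerivAt (fun t : ℝ => (1 - t) * Real.log (1 - p)) (-Real.log (1 - p)) x := by
      simpa using hlin.mul_const (Real.log (1 - p))
    have h5 : HasDerivAt (fun t : ℝ => 2 * (t - p) ^ 2) (2 * (2 * (x - p))) x := by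
      have := ((hasDerivAt_id x).sub_const p).pow 2
      simpa [mul_comm, mul_assoc, mul_left_comm] using this.const_mul 2
    have := (((h1.add h2).sub h3).sub h4).sub h5
    exact this.congr_deriv (by ring)
  -- g is antitone on [0,p], monotone on [p,1]
  have hanti : AntitoneOn g (Icc 0 p) := by
    apply antitoneOn_of_deriv_nonpos (convex_Icc 0 p) hcont.continuousOn
    · intro x hx
      rw [interior_Icc] at hx
      exact ((hderiv x ⟨hx.1, lt_trans hx.2 hp1⟩).differentiableAt).differentiableWithinAt
    · intro x hx
      rw [interior_Icc] at hx
      have hx' : x ∈ Ioo (0:ℝ) 1 := ⟨hx.1, lt_trans hx.2 hp1⟩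
      rw [(hderiv x hx').deriv]
      have := phi_mono hx' ⟨hp0, hp1⟩ (le_of_lt hx.2)
      simpa using this
  have hmono : MonotoneOn g (Icc p 1) := by
    apply monotoneOn_of_deriv_nonneg (convex_Icc p 1) hcont.continuousOn
    · intro x hx
      rw [interior_Icc] at hx
      exact ((hderiv x ⟨lt_trans hp0 hx.1, hx.2⟩).differentiableAt).differentiableWithinAt
    · intro x hx
      rw [interior_Icc] at hx
      have hx' : x ∈ Ioo (0:ℝ) 1 := ⟨lt_trans hp0 hx.1, hx.2⟩
      rw [(hderiv x hx').deriv]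
      have := phi_mono ⟨hp0, hp1⟩ hx' (le_of_lt hx.1)
      simpa using this
  have : 0 ≤ g t := by
    rcases le_total t p with h | h
    · have := hanti ⟨ht0, h⟩ ⟨ht0.trans h, le_refl p⟩ h
      rw [hgp] at this; exact this
    · have := hmono ⟨le_refl p, hp1.le⟩ ⟨h, ht1⟩ h
      rw [hgp] at this
      exact this
  simp only [hg] at this
  linarith

lemma choose_mul_le_one (n k : ℕ) (hn : 1 ≤ n) (hk : k ≤ n) :
    (n.choose k : ℝ) * ((k:ℝ)/n) ^ k * (1 - (k:ℝ)/n) ^ (n - k) ≤ 1 := by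
  set t : ℝ := (k:ℝ)/n with ht
  have hn0 : (0:ℝ) < n := by exact_mod_cast hn
  have ht0 : 0 ≤ t := by positivity
  have ht1 : t ≤ 1 := by rw [ht, div_le_one hn0]; exact_mod_cast hk
  have hsum : ∑ j ∈ Finset.range (n+1), t ^ j * (1-t) ^ (n-j) * (n.choose j : ℝ) = 1 := by
    have := add_pow t (1-t) n
    simp at this
    rw [← this]
  calc (n.choose k : ℝ) * t ^ k * (1 - t) ^ (n - k)
      = t ^ k * (1-t) ^ (n-k) * (n.choose k : ℝ) := by ring
    _ ≤ ∑ j ∈ Finset.range (n+1), t ^ j * (1-t) ^ (n-j) * (n.choose j : ℝ) := by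
        apply Finset.single_le_sum (f := fun j => t ^ j * (1-t) ^ (n-j) * (n.choose j : ℝ))
        · intro j _
          have : 0 ≤ 1 - t := by linarith
          positivity
        · simpa using Nat.lt_succ_of_le hk
    _ = 1 := hsum

lemma choose_le_exp (n k : ℕ) (hn : 1 ≤ n) (hk : k ≤ n) :
    (n.choose k : ℝ) ≤
      Real.exp (-((k:ℝ) * Real.log ((k:ℝ)/n) + ((n:ℝ) - k) * Real.log (1 - (k:ℝ)/n))) := by
  have hn0 : (0:ℝ) < n := by exact_mod_cast hn
  rcases Nat.eq_zero_or_pos k with rfl | hk0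
  · simp
  rcases eq_or_lt_of_le hk with rfl | hkn
  · simp [div_self (ne_of_gt hn0)]
  set t : ℝ := (k:ℝ)/n with ht
  have ht0 : 0 < t := by positivity
  have ht1 : t < 1 := by rw [ht, div_lt_one hn0]; exact_mod_cast hkn
  have h1t : 0 < 1 - t := by linarith
  have hpow : t ^ k * (1 - t) ^ (n - k) =
      Real.exp ((k:ℝ) * Real.log t + ((n:ℝ) - k) * Real.log (1 - t)) := by
    rw [Real.exp_add, ← Real.rpow_natCast t k, ← Real.rpow_natCast (1-t) (n-k)]
    rw [Real.rpow_def_of_pos ht0, Real.rpow_def_of_pos h1t]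
    rw [Nat.cast_sub hk]
    ring_nf
  have hb := choose_mul_le_one n k hn hk
  rw [← ht] at hb
  have hppos : 0 < t ^ k * (1 - t) ^ (n - k) := by positivity
  rw [Real.exp_neg, ← hpow]
  calc (n.choose k : ℝ)
      = (n.choose k : ℝ) * (t ^ k * (1 - t) ^ (n - k)) * (t ^ k * (1 - t) ^ (n - k))⁻¹ := by
        field_simp
    _ ≤ 1 * (t ^ k * (1 - t) ^ (n - k))⁻¹ := by
        apply mul_le_mul_of_nonneg_right _ (inv_nonneg.mpr hppos.le)
        rw [← mul_assoc]; exact hb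
    _ = (t ^ k * (1 - t) ^ (n - k))⁻¹ := one_mul _

/-- For every real `p` with `0 ≤ p ≤ 1` and all natural numbers `n ≥ 1`
and `k ≤ n`, one has `C(n,k) · p^k · (1−p)^(n−k) ≤ exp(−2·n·(p − k/n)²)`. -/
theorem binomial_point_mass_le_exp (p : ℝ) (hp0 : 0 ≤ p) (hp1 : p ≤ 1)
    (n k : ℕ) (hn : 1 ≤ n) (hk : k ≤ n) :
    (n.choose k : ℝ) * p ^ k * (1 - p) ^ (n - k) ≤
      Real.exp (-2 * n * (p - (k : ℝ) / n) ^ 2) := by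
  have hn0 : (0:ℝ) < n := by exact_mod_cast hn
  set t : ℝ := (k:ℝ)/n with ht
  have ht0 : 0 ≤ t := by positivity
  have ht1 : t ≤ 1 := by rw [ht, div_le_one hn0]; exact_mod_cast hk
  rcases eq_or_lt_of_le hp0 with rfl | hp0'
  · rcases Nat.eq_zero_or_pos k with rfl | hk0
    · have htz : t = 0 := by simp [ht]
      simp [htz]
    · have hne : k ≠ 0 := Nat.pos_iff_ne_zero.mp hk0
      rw [zero_pow hne, mul_zero, zero_mul]
      exact (Real.exp_pos _).le
  rcases eq_or_lt_of_le hp1 with rfl | hp1'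
  · rcases eq_or_lt_of_le hk with rfl | hkn'
    · have htz : t = 1 := by rw [ht]; exact div_self (ne_of_gt hn0)
      simp [htz]
    · have : n - k ≠ 0 := Nat.sub_ne_zero_of_lt hkn'
      rw [sub_self, zero_pow this, mul_zero]
      exact (Real.exp_pos _).le
  -- main case 0 < p < 1
  have hq : 0 < 1 - p := by linarith
  have hkcast : ((n - k : ℕ) : ℝ) = (n:ℝ) - k := by rw [Nat.cast_sub hk]
  have hpk : p ^ k = Real.exp ((k:ℝ) * Real.log p) := by
    rw [← Real.rpow_natCast p k, Real.rpow_def_of_pos hp0']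
    ring_nf
  have hqk : (1 - p) ^ (n - k) = Real.exp (((n:ℝ) - k) * Real.log (1 - p)) := by
    rw [← hkcast, ← Real.rpow_natCast (1-p) (n-k), Real.rpow_def_of_pos hq]
    ring_nf
  have hC := choose_le_exp n k hn hk
  rw [← ht] at hC
  have hstep : (n.choose k : ℝ) * p ^ k * (1 - p) ^ (n - k) ≤
      Real.exp (-((k:ℝ) * Real.log t + ((n:ℝ) - k) * Real.log (1 - t))
        + (k:ℝ) * Real.log p + ((n:ℝ) - k) * Real.log (1 - p)) := by
    rw [Real.exp_add, Real.exp_add, hpk, hqk]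
    have h1 : (0:ℝ) < Real.exp ((k:ℝ) * Real.log p) := Real.exp_pos _
    have h2 : (0:ℝ) < Real.exp (((n:ℝ) - k) * Real.log (1 - p)) := Real.exp_pos _
    apply mul_le_mul_of_nonneg_right _ h2.le
    exact mul_le_mul_of_nonneg_right hC h1.le
  refine hstep.trans (Real.exp_le_exp.mpr ?_)
  have hpin := pinsker p hp0' hp1' t ht0 ht1
  have hkt : (k:ℝ) = n * t := by rw [ht]; field_simp
  have hnkt : (n:ℝ) - k = n * (1 - t) := by rw [hkt]; ring
  have h2 : 2 * (t - p)^2 * n ≤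
      ((k:ℝ) * Real.log t + ((n:ℝ) - k) * Real.log (1 - t)
        - (k:ℝ) * Real.log p - ((n:ℝ) - k) * Real.log (1 - p)) := by
    have h := mul_le_mul_of_nonneg_left hpin hn0.le
    calc 2 * (t - p)^2 * n = (n:ℝ) * (2 * (t - p)^2) := by ring
      _ ≤ (n:ℝ) * (t * Real.log t + (1 - t) * Real.log (1 - t)
            - t * Real.log p - (1 - t) * Real.log (1 - p)) := h
      _ = (k:ℝ) * Real.log t + ((n:ℝ) - k) * Real.log (1 - t)
            - (k:ℝ) * Real.log p - ((n:ℝ) - k) * Real.log (1 - p) := by rw [hkt]; ring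
  have : (p - t)^2 = (t - p)^2 := by ring
  rw [this]
  nlinarith [h2]
end

section
/- Let (Ω, P) be a probability space, 𝒳 a countable set equipped with the discrete σ-algebra, and (X_i)_{i∈ℕ} an exchangeable sequence of 𝒳-valued random variables on Ω. Then for every ξ ∈ 𝒳, the event consisting of all ω ∈ Ω such that the relative frequencies f_n(ξ)(ω) = (1/n)·|{i < n : X_i(ω) = ξ}| converge as n → ∞ to a limit that is greater than or equal to P(X_0 = ξ) has nonzero probability. -/
open MeasureTheory Filter
open scoped ENNReal NNReal

section Aux
variable {Ω : Type*} [MeasurableSpace Ω] (P : Measure Ω) [IsProbabilityMeasure P]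
  {𝒳 : Type*} [Countable 𝒳] [MeasurableSpace 𝒳] [DiscreteMeasurableSpace 𝒳]
  [DecidableEq 𝒳]
  (X : ℕ → Ω → 𝒳) (ξ : 𝒳)

private lemma exch_set (hX : ∀ i, Measurable (X i))
    (hexch : ∀ (n : ℕ) (σ : Equiv.Perm (Fin n)),
      P.map (fun ω => fun i : Fin n => X (σ i : ℕ) ω) =
        P.map (fun ω => fun i : Fin n => X (i : ℕ) ω))
    (n : ℕ) (σ : Equiv.Perm (Fin n)) (S : Set (Fin n → 𝒳)) :
    P {ω | (fun i : Fin n => X (σ i : ℕ) ω) ∈ S} = P {ω | (fun i : Fin n => X (i : ℕ) ω) ∈ S} := by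
  have h1 : Measurable (fun ω => fun i : Fin n => X (σ i : ℕ) ω) :=
    measurable_pi_lambda _ (fun i => hX _)
  have h2 : Measurable (fun ω => fun i : Fin n => X (i : ℕ) ω) :=
    measurable_pi_lambda _ (fun i => hX _)
  have hS : MeasurableSet S := (Set.to_countable S).measurableSet
  have := congrArg (fun μ : Measure (Fin n → 𝒳) => μ S) (hexch n σ)
  simpa [Measure.map_apply h1 hS, Measure.map_apply h2 hS, Set.preimage] using this

private lemma single_meas (hX : ∀ i, Measurable (X i))
    (hexch : ∀ (n : ℕ) (σ : Equiv.Perm (Fin n)),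
      P.map (fun ω => fun i : Fin n => X (σ i : ℕ) ω) =
        P.map (fun ω => fun i : Fin n => X (i : ℕ) ω))
    (i : ℕ) : P {ω | X i ω = ξ} = P {ω | X 0 ω = ξ} := by
  have h := exch_set P X hX hexch (i+1) (Equiv.swap 0 ⟨i, Nat.lt_succ_self i⟩)
      {v | v 0 = ξ}
  simpa [Equiv.swap_apply_left] using h

private lemma pair_meas (hX : ∀ i, Measurable (X i))
    (hexch : ∀ (n : ℕ) (σ : Equiv.Perm (Fin n)),
      P.map (fun ω => fun i : Fin n => X (σ i : ℕ) ω) =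
        P.map (fun ω => fun i : Fin n => X (i : ℕ) ω))
    (i j : ℕ) (hij : i ≠ j) :
    P {ω | X i ω = ξ ∧ X j ω = ξ} = P {ω | X 0 ω = ξ ∧ X 1 ω = ξ} := by
  set n := max i j + 2 with hn
  have hi : i < n := lt_of_le_of_lt (le_max_left i j) (by omega)
  have hj : j < n := lt_of_le_of_lt (le_max_right i j) (by omega)
  set i' : Fin n := ⟨i, hi⟩
  set j' : Fin n := ⟨j, hj⟩
  have hij' : i' ≠ j' := fun h => hij (congrArg Fin.val h)
  set τ : Equiv.Perm (Fin n) := Equiv.swap 0 i'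
  set t : Fin n := τ j'
  have ht0 : t ≠ 0 := by
    intro h
    have h2 : j' = τ.symm 0 := by rw [← h]; simp [t]
    rw [Equiv.symm_swap, Equiv.swap_apply_left] at h2
    exact hij' h2.symm
  have h01 : (0 : Fin n) ≠ 1 := by
    intro h
    have := congrArg Fin.val h
    simp [Fin.val_zero, Fin.val_one] at this
    omega
  set σ : Equiv.Perm (Fin n) := (Equiv.swap 1 t).trans τ
  have hσ0 : σ 0 = i' := by
    simp only [σ, Equiv.trans_apply]
    rw [Equiv.swap_apply_of_ne_of_ne h01 ht0.symm]
    exact Equiv.swap_apply_left 0 i'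
  have hσ1 : σ 1 = j' := by
    simp only [σ, Equiv.trans_apply, Equiv.swap_apply_left, t, τ, Equiv.swap_apply_self]
  have h := exch_set P X hX hexch n σ {v | v 0 = ξ ∧ v 1 = ξ}
  simp only [Set.mem_setOf_eq, hσ0, hσ1] at h
  have hv0 : ((0 : Fin n) : ℕ) = 0 := rfl
  have hv1 : ((1 : Fin n) : ℕ) = 1 := by
    simp [Fin.val_one]
    exact Nat.mod_eq_of_lt (by omega)
  rw [hv0, hv1] at h  -- careful
  convert h using 3 <;> simp [i', j']
end Aux

section Aux2
set_option linter.unusedSectionVars false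
variable {Ω : Type*} [MeasurableSpace Ω] (P : Measure Ω) [IsProbabilityMeasure P]
  {𝒳 : Type*} [Countable 𝒳] [MeasurableSpace 𝒳] [DiscreteMeasurableSpace 𝒳]
  [DecidableEq 𝒳]
  (X : ℕ → Ω → 𝒳) (ξ : 𝒳)

private noncomputable def Yf (i : ℕ) (ω : Ω) : ℝ := if X i ω = ξ then 1 else 0

private lemma Yf_nonneg (i : ℕ) (ω : Ω) : 0 ≤ Yf X ξ i ω := by
  unfold Yf; split <;> norm_num

private lemma Yf_le_one (i : ℕ) (ω : Ω) : Yf X ξ i ω ≤ 1 := by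
  unfold Yf; split <;> norm_num

private lemma integral_ite {s : Set Ω} [DecidablePred (· ∈ s)] (hs : MeasurableSet s) :
    ∫ ω, (if ω ∈ s then (1:ℝ) else 0) ∂P = (P s).toReal := by
  rw [← measureReal_def, ← integral_indicator_one hs]
  congr 1 with ω
  by_cases h : ω ∈ s <;> simp [Set.indicator_apply, h]

private lemma measset (hX : ∀ i, Measurable (X i)) (i : ℕ) :
    MeasurableSet {ω | X i ω = ξ} := (hX i) (MeasurableSet.singleton ξ)

private lemma Yf_meas (hX : ∀ i, Measurable (X i)) (i : ℕ) :
    Measurable (Yf X ξ i) := by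
  unfold Yf
  exact Measurable.ite (measset X ξ hX i) measurable_const measurable_const

private lemma Yf_intble (hX : ∀ i, Measurable (X i)) (i : ℕ) :
    Integrable (Yf X ξ i) P := by
  apply (integrable_const (1:ℝ)).mono' (Yf_meas X ξ hX i).aestronglyMeasurable
  filter_upwards with ω
  rw [Real.norm_eq_abs, abs_of_nonneg (Yf_nonneg X ξ i ω)]
  exact Yf_le_one X ξ i ω

private lemma Yf_mul (i j : ℕ) (ω : Ω) :
    Yf X ξ i ω * Yf X ξ j ω = if ω ∈ {ω' | X i ω' = ξ ∧ X j ω' = ξ} then 1 else 0 := by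
  unfold Yf
  by_cases h1 : X i ω = ξ <;> by_cases h2 : X j ω = ξ <;> simp [h1, h2]

private lemma Yf_mul_intble (hX : ∀ i, Measurable (X i)) (i j : ℕ) :
    Integrable (fun ω => Yf X ξ i ω * Yf X ξ j ω) P := by
  apply (integrable_const (1:ℝ)).mono'
    ((Yf_meas X ξ hX i).mul (Yf_meas X ξ hX j)).aestronglyMeasurable
  filter_upwards with ω
  rw [Real.norm_eq_abs, Pi.mul_apply, abs_of_nonneg (mul_nonneg (Yf_nonneg X ξ i ω) (Yf_nonneg X ξ j ω))]
  exact mul_le_one₀ (Yf_le_one X ξ i ω) (Yf_nonneg X ξ j ω) (Yf_le_one X ξ j ω)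

variable (hX : ∀ i, Measurable (X i))
  (hexch : ∀ (n : ℕ) (σ : Equiv.Perm (Fin n)),
      P.map (fun ω => fun i : Fin n => X (σ i : ℕ) ω) =
        P.map (fun ω => fun i : Fin n => X (i : ℕ) ω))
include hX hexch

private lemma moment_single (i : ℕ) :
    ∫ ω, Yf X ξ i ω ∂P = (P {ω | X 0 ω = ξ}).toReal := by
  unfold Yf
  rw [show (fun ω => if X i ω = ξ then (1:ℝ) else 0)
      = fun ω => if ω ∈ {ω' | X i ω' = ξ} then (1:ℝ) else 0 from rfl]
  rw [integral_ite P (measset X ξ hX i), single_meas P X ξ hX hexch i]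

private lemma moment_pair (i j : ℕ) (hij : i ≠ j) :
    ∫ ω, Yf X ξ i ω * Yf X ξ j ω ∂P = (P {ω | X 0 ω = ξ ∧ X 1 ω = ξ}).toReal := by
  have hs : MeasurableSet {ω | X i ω = ξ ∧ X j ω = ξ} :=
    (measset X ξ hX i).inter (measset X ξ hX j)
  simp only [Yf_mul]
  rw [integral_ite P hs, pair_meas P X ξ hX hexch i j hij]

private lemma moment (i j : ℕ) :
    ∫ ω, Yf X ξ i ω * Yf X ξ j ω ∂P =
      if i = j then (P {ω | X 0 ω = ξ}).toReal
      else (P {ω | X 0 ω = ξ ∧ X 1 ω = ξ}).toReal := by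
  by_cases h : i = j
  · subst h
    simp only [if_pos rfl]
    have : ∀ ω, Yf X ξ i ω * Yf X ξ i ω = Yf X ξ i ω := by
      intro ω; unfold Yf; split <;> norm_num
    simp only [this]
    exact moment_single P X ξ hX hexch i
  · rw [if_neg h]
    exact moment_pair P X ξ hX hexch i j h

private lemma quad_form (c : ℕ → ℝ) (m : ℕ) :
    ∫ ω, (∑ i ∈ Finset.range m, c i * Yf X ξ i ω)^2 ∂P =
      ((P {ω | X 0 ω = ξ}).toReal - (P {ω | X 0 ω = ξ ∧ X 1 ω = ξ}).toReal) *
        (∑ i ∈ Finset.range m, (c i)^2) +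
      (P {ω | X 0 ω = ξ ∧ X 1 ω = ξ}).toReal * (∑ i ∈ Finset.range m, c i)^2 := by
  set a := (P {ω | X 0 ω = ξ}).toReal with ha
  set b := (P {ω | X 0 ω = ξ ∧ X 1 ω = ξ}).toReal with hb
  have expand : ∀ ω, (∑ i ∈ Finset.range m, c i * Yf X ξ i ω)^2
      = ∑ i ∈ Finset.range m, ∑ j ∈ Finset.range m,
          (c i * c j) * (Yf X ξ i ω * Yf X ξ j ω) := by
    intro ω
    rw [sq, Finset.sum_mul_sum]
    apply Finset.sum_congr rfl; intro i _
    apply Finset.sum_congr rfl; intro j _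
    ring
  simp only [expand]
  rw [integral_finset_sum _ (fun i _ => integrable_finset_sum _ (fun j _ =>
    ((Yf_mul_intble P X ξ hX i j).const_mul _)))]
  have : ∀ i ∈ Finset.range m, ∫ ω, ∑ j ∈ Finset.range m,
      (c i * c j) * (Yf X ξ i ω * Yf X ξ j ω) ∂P
      = ∑ j ∈ Finset.range m, (c i * c j) * (if i = j then a else b) := by
    intro i _
    rw [integral_finset_sum _ (fun j _ => ((Yf_mul_intble P X ξ hX i j).const_mul _))]
    apply Finset.sum_congr rfl; intro j _
    rw [integral_const_mul, moment P X ξ hX hexch i j, ← ha, ← hb]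
  rw [Finset.sum_congr rfl this]
  have step : ∀ i j : ℕ, (c i * c j) * (if i = j then a else b)
      = c i * c j * b + (if i = j then c i * c j * (a - b) else 0) := by
    intro i j; by_cases h : i = j <;> simp [h] <;> ring
  simp only [step, Finset.sum_add_distrib]
  have h1 : ∑ i ∈ Finset.range m, ∑ j ∈ Finset.range m, c i * c j * b
      = b * (∑ i ∈ Finset.range m, c i)^2 := by
    rw [sq, Finset.sum_mul_sum]
    rw [Finset.mul_sum]
    apply Finset.sum_congr rfl; intro i _
    rw [Finset.mul_sum]
    apply Finset.sum_congr rfl; intro j _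
    ring
  have h2 : ∀ i ∈ Finset.range m, ∑ j ∈ Finset.range m,
      (if i = j then c i * c j * (a - b) else 0) = (c i)^2 * (a - b) := by
    intro i hi
    rw [Finset.sum_ite_eq (Finset.range m) i (fun j => c i * c j * (a-b)), if_pos hi]
    ring
  rw [h1, Finset.sum_congr rfl h2, ← Finset.sum_mul]
  ring
end Aux2

section Aux3
set_option linter.unusedSectionVars false
variable {Ω : Type*} [MeasurableSpace Ω] (P : Measure Ω) [IsProbabilityMeasure P]
  {𝒳 : Type*} [Countable 𝒳] [MeasurableSpace 𝒳] [DiscreteMeasurableSpace 𝒳]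
  [DecidableEq 𝒳]
  (X : ℕ → Ω → 𝒳) (ξ : 𝒳)
  (hX : ∀ i, Measurable (X i))
  (hexch : ∀ (n : ℕ) (σ : Equiv.Perm (Fin n)),
      P.map (fun ω => fun i : Fin n => X (σ i : ℕ) ω) =
        P.map (fun ω => fun i : Fin n => X (i : ℕ) ω))

private noncomputable def Ff (n : ℕ) (ω : Ω) : ℝ :=
  (1 / (n:ℝ)) * ∑ i ∈ Finset.range n, Yf X ξ i ω

private lemma filter_lt_card (n m : ℕ) (hnm : n ≤ m) :
    ((Finset.range m).filter (fun i => i < n)).card = n := by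
  have : (Finset.range m).filter (fun i => i < n) = Finset.range n := by
    ext i; simp only [Finset.mem_filter, Finset.mem_range]; omega
  rw [this, Finset.card_range]

private lemma sum_ite_lt (n m : ℕ) (hnm : n ≤ m) (x : ℝ) :
    ∑ i ∈ Finset.range m, (if i < n then x else 0) = n * x := by
  rw [← Finset.sum_filter, Finset.sum_const, filter_lt_card n m hnm, nsmul_eq_mul]

private lemma sum_ite_lt' (n m : ℕ) (hnm : n ≤ m) (x y : ℝ) :
    ∑ i ∈ Finset.range m, (if i < n then x else y) = n * x + (m - n) * y := by
  have : ∀ i : ℕ, (if i < n then x else y) = (if i < n then x - y else 0) + y := by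
    intro i; by_cases h : i < n <;> simp [h]
  simp only [this, Finset.sum_add_distrib, sum_ite_lt n m hnm, Finset.sum_const,
    Finset.card_range, nsmul_eq_mul]
  have : ((m:ℝ) - n) * y = (m:ℝ) * y - n * y := by ring
  rw [this]; ring

include hX hexch

private lemma diff_sq (n m : ℕ) (hn : 1 ≤ n) (hnm : n ≤ m) :
    ∫ ω, (Ff X ξ n ω - Ff X ξ m ω)^2 ∂P =
      ((P {ω | X 0 ω = ξ}).toReal - (P {ω | X 0 ω = ξ ∧ X 1 ω = ξ}).toReal) *
        (1/(n:ℝ) - 1/(m:ℝ)) := by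
  have hm : 1 ≤ m := le_trans hn hnm
  have hn0 : (n:ℝ) ≠ 0 := Nat.cast_ne_zero.mpr (by omega)
  have hm0 : (m:ℝ) ≠ 0 := Nat.cast_ne_zero.mpr (by omega)
  set c : ℕ → ℝ := fun i => (if i < n then 1/(n:ℝ) else 0) - 1/(m:ℝ) with hc
  have key : ∀ ω, Ff X ξ n ω - Ff X ξ m ω = ∑ i ∈ Finset.range m, c i * Yf X ξ i ω := by
    intro ω
    have h1 : Ff X ξ n ω = ∑ i ∈ Finset.range m,
        (if i < n then 1/(n:ℝ) else 0) * Yf X ξ i ω := by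
      unfold Ff
      rw [Finset.mul_sum]
      simp only [ite_mul, zero_mul]
      rw [← Finset.sum_filter]
      congr 1
      ext i; simp only [Finset.mem_filter, Finset.mem_range]; omega
    have h2 : Ff X ξ m ω = ∑ i ∈ Finset.range m, (1/(m:ℝ)) * Yf X ξ i ω := by
      unfold Ff; rw [Finset.mul_sum]
    rw [h1, h2, ← Finset.sum_sub_distrib]
    apply Finset.sum_congr rfl; intro i _
    simp only [hc]; ring
  simp only [key]
  rw [quad_form P X ξ hX hexch c m]
  have hsum : ∑ i ∈ Finset.range m, c i = 0 := by
    simp only [hc, Finset.sum_sub_distrib, sum_ite_lt n m hnm, Finset.sum_const,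
      Finset.card_range, nsmul_eq_mul]
    field_simp
    ring
  have hsumsq : ∑ i ∈ Finset.range m, (c i)^2 = 1/(n:ℝ) - 1/(m:ℝ) := by
    have : ∀ i : ℕ, (c i)^2 = if i < n then (1/(n:ℝ) - 1/(m:ℝ))^2 else (1/(m:ℝ))^2 := by
      intro i; simp only [hc]; by_cases h : i < n <;> simp [h] <;> ring
    simp only [this, sum_ite_lt' n m hnm]
    have hcast : (1:ℝ) ≤ (n:ℝ) := by exact_mod_cast hn
    have hcast2 : (n:ℝ) ≤ (m:ℝ) := by exact_mod_cast hnm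
    field_simp
    ring
  rw [hsum, hsumsq]
  ring
end Aux3


private lemma abs_integral_le_sqrt {Ω : Type*} [MeasurableSpace Ω] (P : Measure Ω)
    [IsProbabilityMeasure P] (h : Ω → ℝ) (hi : Integrable h P)
    (hi2 : Integrable (fun ω => (h ω)^2) P) :
    ∫ ω, |h ω| ∂P ≤ Real.sqrt (∫ ω, (h ω)^2 ∂P) := by
  set t := ∫ ω, |h ω| ∂P with ht
  have ht0 : 0 ≤ t := integral_nonneg (fun ω => abs_nonneg _)
  have key : 0 ≤ ∫ ω, (h ω)^2 ∂P - t^2 := by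
    have expand : ∀ ω, (|h ω| - t)^2 = (h ω)^2 - 2*t*|h ω| + t^2 := by
      intro ω; rw [sub_sq, sq_abs]; ring
    have h3 : (0:ℝ) ≤ ∫ ω, (|h ω| - t)^2 ∂P := integral_nonneg (fun ω => sq_nonneg _)
    have iB : Integrable (fun ω => 2*t*|h ω|) P := hi.abs.const_mul (2*t)
    have iA : Integrable (fun ω => (h ω)^2 - 2*t*|h ω|) P := hi2.sub iB
    have h4 : ∫ ω, (|h ω| - t)^2 ∂P = ∫ ω, (h ω)^2 ∂P - 2*t*t + t^2 := by
      simp only [expand]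
      rw [integral_add iA (integrable_const _), integral_sub hi2 iB,
        integral_const_mul, integral_const]
      simp [← ht]
    nlinarith [h3, h4]
  have : t^2 ≤ ∫ ω, (h ω)^2 ∂P := by linarith
  exact (Real.le_sqrt ht0 (integral_nonneg fun ω => sq_nonneg _)).mpr this

private lemma summable_sqrt_cube : Summable (fun k : ℕ => Real.sqrt (2 / ((k:ℝ)+1)^3)) := by
  have h1 : Summable (fun n : ℕ => 1 / (n:ℝ) ^ ((3:ℝ)/2)) :=
    Real.summable_one_div_nat_rpow.mpr (by norm_num)
  have h2 : Summable (fun k : ℕ => 1 / ((k:ℝ)+1) ^ ((3:ℝ)/2)) := by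
    have := (summable_nat_add_iff (f := fun n : ℕ => 1 / (n:ℝ) ^ ((3:ℝ)/2)) 1).mpr h1
    simpa using this
  have := h2.mul_left (Real.sqrt 2)
  apply this.congr
  intro k
  have hk : (0:ℝ) < (k:ℝ)+1 := by positivity
  have hs : Real.sqrt (((k:ℝ)+1)^3) = ((k:ℝ)+1) ^ ((3:ℝ)/2) := by
    rw [Real.sqrt_eq_rpow, ← Real.rpow_natCast ((k:ℝ)+1) 3, ← Real.rpow_mul hk.le]
    norm_num
  rw [mul_one_div, Real.sqrt_div (by norm_num : (0:ℝ) ≤ 2), hs]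

private lemma sqrt_tendsto_atTop : Tendsto Nat.sqrt atTop atTop := by
  apply tendsto_atTop_atTop.mpr
  intro b
  exact ⟨b*b, fun n hn => Nat.le_sqrt.mpr hn⟩

private lemma tendsto_of_tendsto_sq (Y : ℕ → ℝ) (h0 : ∀ i, 0 ≤ Y i) (h1 : ∀ i, Y i ≤ 1)
    (L : ℝ)
    (hc : Tendsto (fun k : ℕ => (1/((k^2 : ℕ):ℝ)) * ∑ i ∈ Finset.range (k^2), Y i)
      atTop (nhds L)) :
    Tendsto (fun n : ℕ => (1/(n:ℝ)) * ∑ i ∈ Finset.range n, Y i) atTop (nhds L) := by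
  set S : ℕ → ℝ := fun n => ∑ i ∈ Finset.range n, Y i with hS
  set f : ℕ → ℝ := fun n => (1/(n:ℝ)) * S n with hf
  have hS0 : ∀ n, 0 ≤ S n := fun n => Finset.sum_nonneg (fun i _ => h0 i)
  have hSle : ∀ n, S n ≤ n := by
    intro n
    calc S n ≤ ∑ i ∈ Finset.range n, (1:ℝ) := Finset.sum_le_sum (fun i _ => h1 i)
      _ = n := by simp
  have hSdiff : ∀ m n : ℕ, m ≤ n → S n - S m ≤ (n:ℝ) - m := by
    intro m n hmn
    have : S n - S m = ∑ i ∈ Finset.Ico m n, Y i := by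
      rw [hS]
      simp only []
      rw [← Finset.sum_range_add_sum_Ico Y hmn]
      ring
    rw [this]
    calc ∑ i ∈ Finset.Ico m n, Y i ≤ ∑ i ∈ Finset.Ico m n, (1:ℝ) :=
          Finset.sum_le_sum (fun i _ => h1 i)
      _ = ((n - m : ℕ) : ℝ) := by simp [Nat.card_Ico]
      _ = (n:ℝ) - m := by rw [Nat.cast_sub hmn]
  have hSmono : ∀ m n : ℕ, m ≤ n → S m ≤ S n := by
    intro m n hmn
    apply Finset.sum_le_sum_of_subset_of_nonneg (Finset.range_subset_range.mpr hmn)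
    intro i _ _; exact h0 i
  -- key estimate
  have est : ∀ n : ℕ, 1 ≤ n → |f n - f (n.sqrt^2)| ≤ 2/(n.sqrt:ℝ) := by
    intro n hn
    set k := n.sqrt with hk
    have hk1 : 1 ≤ k := by
      rw [hk]; exact Nat.one_le_iff_ne_zero.mpr (by
        intro h; have := Nat.sqrt_eq_zero.mp h; omega)
    have hm : k^2 ≤ n := by rw [hk]; simpa [sq] using Nat.sqrt_le' n
    have hnlt : n < (k+1)^2 := by rw [hk]; simpa [Nat.succ_eq_add_one, sq] using Nat.lt_succ_sqrt' n
    have hn0 : (0:ℝ) < (n:ℝ) := by exact_mod_cast Nat.lt_of_lt_of_le Nat.zero_lt_one hn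
    have hk0 : (0:ℝ) < (k:ℝ) := by exact_mod_cast hk1
    have hm0 : (0:ℝ) < ((k^2:ℕ):ℝ) := by push_cast; positivity
    have hmn : ((k^2:ℕ):ℝ) ≤ (n:ℝ) := by exact_mod_cast hm
    have iden : f n - f (k^2) = (S n - S (k^2))/n + S (k^2) * (1/(n:ℝ) - 1/((k^2:ℕ):ℝ)) := by
      rw [hf]
      field_simp
      ring
    have hneg : 1/(n:ℝ) - 1/((k^2:ℕ):ℝ) ≤ 0 := by
      have := one_div_le_one_div_of_le hm0 hmn
      linarith
    have hup : f n - f (k^2) ≤ ((n:ℝ) - ((k^2:ℕ):ℝ))/n := by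
      rw [iden]
      have t1 : (S n - S (k^2))/n ≤ ((n:ℝ) - ((k^2:ℕ):ℝ))/n :=
        (div_le_div_iff_of_pos_right hn0).mpr (hSdiff _ _ hm)
      have t2 : S (k^2) * (1/(n:ℝ) - 1/((k^2:ℕ):ℝ)) ≤ 0 :=
        mul_nonpos_of_nonneg_of_nonpos (hS0 _) hneg
      linarith
    have hlo : -(((n:ℝ) - ((k^2:ℕ):ℝ))/n) ≤ f n - f (k^2) := by
      rw [iden]
      have t1 : 0 ≤ (S n - S (k^2))/n :=
        div_nonneg (sub_nonneg.mpr (hSmono _ _ hm)) hn0.le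
      have t2 : ((k^2:ℕ):ℝ) * (1/(n:ℝ) - 1/((k^2:ℕ):ℝ)) ≤
          S (k^2) * (1/(n:ℝ) - 1/((k^2:ℕ):ℝ)) :=
        mul_le_mul_of_nonpos_right (hSle _) hneg
      have t3 : ((k^2:ℕ):ℝ) * (1/(n:ℝ) - 1/((k^2:ℕ):ℝ)) = (((k^2:ℕ):ℝ) - (n:ℝ))/n := by
        field_simp
      rw [t3] at t2
      have : (((k^2:ℕ):ℝ) - (n:ℝ))/n = -(((n:ℝ) - ((k^2:ℕ):ℝ))/n) := by ring
      rw [this] at t2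
      linarith
    have habs : |f n - f (k^2)| ≤ ((n:ℝ) - ((k^2:ℕ):ℝ))/n := abs_le.mpr ⟨hlo, hup⟩
    have hfin : ((n:ℝ) - ((k^2:ℕ):ℝ))/n ≤ 2/(k:ℝ) := by
      have hb : (n:ℝ) - ((k^2:ℕ):ℝ) ≤ 2*(k:ℝ) := by
        have : n ≤ k^2 + 2*k := by nlinarith [hnlt]
        push_cast
        have : (n:ℝ) ≤ (k:ℝ)^2 + 2*k := by exact_mod_cast this
        linarith
      have hknsq : (k:ℝ)^2 ≤ (n:ℝ) := by push_cast at hmn ⊢; linarith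
      calc ((n:ℝ) - ((k^2:ℕ):ℝ))/n ≤ (2*(k:ℝ))/((k:ℝ)^2) := by
            apply div_le_div₀ (by positivity) hb (by positivity) hknsq
        _ = 2/(k:ℝ) := by field_simp
    linarith
  have h2 : Tendsto (fun n : ℕ => f (n.sqrt ^ 2)) atTop (nhds L) := by
    exact hc.comp sqrt_tendsto_atTop
  have h3 : Tendsto (fun n : ℕ => 2/((n.sqrt:ℕ):ℝ)) atTop (nhds 0) :=
    (tendsto_const_div_atTop_nhds_zero_nat 2).comp sqrt_tendsto_atTop
  have h4 : Tendsto (fun n : ℕ => |f (n.sqrt ^ 2) - L|) atTop (nhds 0) := by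
    have := (h2.sub (tendsto_const_nhds (x := L))).abs
    simpa using this
  rw [← tendsto_sub_nhds_zero_iff]
  apply squeeze_zero_norm' (a := fun n : ℕ => 2/((n.sqrt:ℕ):ℝ) + |f (n.sqrt ^ 2) - L|)
  · filter_upwards [eventually_ge_atTop 1] with n hn
    have := est n hn
    calc ‖f n - L‖ = |f n - L| := rfl
      _ ≤ |f n - f (n.sqrt^2)| + |f (n.sqrt^2) - L| := abs_sub_le _ _ _
      _ ≤ 2/((n.sqrt:ℕ):ℝ) + |f (n.sqrt^2) - L| := by linarith
  · simpa using h3.add h4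


section Aux4
set_option linter.unusedSectionVars false
variable {Ω : Type*} [MeasurableSpace Ω] (P : Measure Ω) [IsProbabilityMeasure P]
  {𝒳 : Type*} [Countable 𝒳] [MeasurableSpace 𝒳] [DiscreteMeasurableSpace 𝒳]
  [DecidableEq 𝒳]
  (X : ℕ → Ω → 𝒳) (ξ : 𝒳)
  (hX : ∀ i, Measurable (X i))
  (hexch : ∀ (n : ℕ) (σ : Equiv.Perm (Fin n)),
      P.map (fun ω => fun i : Fin n => X (σ i : ℕ) ω) =
        P.map (fun ω => fun i : Fin n => X (i : ℕ) ω))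

private lemma Ff_nonneg (n : ℕ) (ω : Ω) : 0 ≤ Ff X ξ n ω := by
  unfold Ff
  exact mul_nonneg (by positivity) (Finset.sum_nonneg fun i _ => Yf_nonneg X ξ i ω)

private lemma Ff_le_one (n : ℕ) (ω : Ω) : Ff X ξ n ω ≤ 1 := by
  unfold Ff
  rcases Nat.eq_zero_or_pos n with h|h
  · subst h; simp
  · have hn0 : (0:ℝ) < n := by exact_mod_cast h
    have hS : ∑ i ∈ Finset.range n, Yf X ξ i ω ≤ (n:ℝ) := by
      calc ∑ i ∈ Finset.range n, Yf X ξ i ω ≤ ∑ i ∈ Finset.range n, (1:ℝ) :=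
            Finset.sum_le_sum fun i _ => Yf_le_one X ξ i ω
        _ = n := by simp
    calc (1/(n:ℝ)) * ∑ i ∈ Finset.range n, Yf X ξ i ω ≤ (1/(n:ℝ)) * n :=
          mul_le_mul_of_nonneg_left hS (by positivity)
      _ = 1 := by field_simp

include hX

private lemma Ff_meas (n : ℕ) : Measurable (Ff X ξ n) := by
  unfold Ff
  exact (Finset.measurable_sum _ (fun i _ => Yf_meas X ξ hX i)).const_mul _

private lemma Ff_intble (n : ℕ) : Integrable (Ff X ξ n) P := by
  apply (integrable_const (1:ℝ)).mono' (Ff_meas X ξ hX n).aestronglyMeasurable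
  filter_upwards with ω
  rw [Real.norm_eq_abs, abs_of_nonneg (Ff_nonneg X ξ n ω)]
  exact Ff_le_one X ξ n ω

include hexch in
private lemma integral_Ff (n : ℕ) (hn : 1 ≤ n) :
    ∫ ω, Ff X ξ n ω ∂P = (P {ω | X 0 ω = ξ}).toReal := by
  unfold Ff
  rw [integral_const_mul, integral_finset_sum _ (fun i _ => Yf_intble P X ξ hX i),
    Finset.sum_congr rfl (fun i _ => moment_single P X ξ hX hexch i),
    Finset.sum_const, Finset.card_range, nsmul_eq_mul]
  have hne : (n:ℝ) ≠ 0 := Nat.cast_ne_zero.mpr (by omega)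
  field_simp
end Aux4

/-- Let `(Ω, P)` be a probability space, `𝒳` a countable set with the
discrete σ-algebra, and `(X_i)` an exchangeable sequence of `𝒳`-valued random variables.
Then for every `ξ ∈ 𝒳`, the event that the relative frequencies
`f_n(ξ) = (1/n)·|{i < n : X_i = ξ}|` converge to a limit `≥ P(X_0 = ξ)` has nonzero
probability. -/
theorem exchangeable_limit_frequency_ge_prob
    {Ω : Type*} [MeasurableSpace Ω] (P : Measure Ω) [IsProbabilityMeasure P]
    {𝒳 : Type*} [Countable 𝒳] [MeasurableSpace 𝒳] [DiscreteMeasurableSpace 𝒳]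
    [DecidableEq 𝒳]
    (X : ℕ → Ω → 𝒳) (hX : ∀ i, Measurable (X i))
    (hexch : ∀ (n : ℕ) (σ : Equiv.Perm (Fin n)),
      P.map (fun ω => fun i : Fin n => X (σ i : ℕ) ω) =
        P.map (fun ω => fun i : Fin n => X (i : ℕ) ω))
    (ξ : 𝒳) :
    P {ω | ∃ L : ℝ,
        Tendsto
          (fun n : ℕ =>
            (1 / (n : ℝ)) * ((Finset.range n).filter (fun i => X i ω = ξ)).card)
          atTop (nhds L) ∧
        (P {ω' | X 0 ω' = ξ}).toReal ≤ L} ≠ 0 := by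
  classical
  set a := (P {ω' | X 0 ω' = ξ}).toReal with ha
  set b := (P {ω | X 0 ω = ξ ∧ X 1 ω = ξ}).toReal with hb
  have ha' : a = (P {ω | X 0 ω = ξ}).toReal := ha
  have hba : b ≤ a := by
    rw [ha, hb]
    exact ENNReal.toReal_mono (measure_ne_top P _)
      (measure_mono (fun ω hω => hω.1))
  have ha1 : a ≤ 1 := by
    rw [ha]
    have := ENNReal.toReal_mono ENNReal.one_ne_top (prob_le_one (μ := P)
      (s := {ω' | X 0 ω' = ξ}))
    simpa using this
  have hb0 : 0 ≤ b := ENNReal.toReal_nonneg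
  -- the subsequence along squares and its increments
  set g : ℕ → Ω → ℝ := fun k => Ff X ξ ((k+1)^2) with hg
  set Δ : ℕ → Ω → ℝ := fun k ω => g (k+1) ω - g k ω with hΔ
  have hΔmeas : ∀ k, Measurable (Δ k) :=
    fun k => (Ff_meas X ξ hX _).sub (Ff_meas X ξ hX _)
  have hΔint : ∀ k, Integrable (Δ k) P :=
    fun k => (Ff_intble P X ξ hX _).sub (Ff_intble P X ξ hX _)
  have hΔabs2 : ∀ k ω, |Δ k ω| ≤ 2 := by
    intro k ω
    have e1 : Δ k ω = Ff X ξ ((k+2)^2) ω - Ff X ξ ((k+1)^2) ω := rfl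
    rw [e1, abs_le]
    constructor <;>
      nlinarith [Ff_nonneg X ξ ((k+2)^2) ω, Ff_le_one X ξ ((k+2)^2) ω,
        Ff_nonneg X ξ ((k+1)^2) ω, Ff_le_one X ξ ((k+1)^2) ω]
  have hΔsq_int : ∀ k, Integrable (fun ω => (Δ k ω)^2) P := by
    intro k
    apply (integrable_const (4:ℝ)).mono' ((hΔmeas k).pow_const 2).aestronglyMeasurable
    filter_upwards with ω
    rw [Real.norm_eq_abs, abs_of_nonneg (sq_nonneg _)]
    nlinarith [hΔabs2 k ω, abs_nonneg (Δ k ω), sq_abs (Δ k ω)]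
  have hΔsq : ∀ k, ∫ ω, (Δ k ω)^2 ∂P =
      (a - b) * (1/((((k+1)^2 : ℕ)):ℝ) - 1/((((k+2)^2 : ℕ)):ℝ)) := by
    intro k
    have hd := diff_sq P X ξ hX hexch ((k+1)^2) ((k+2)^2)
      (Nat.one_le_iff_ne_zero.mpr (pow_ne_zero 2 (Nat.succ_ne_zero k)))
      (Nat.pow_le_pow_left (by omega) 2)
    rw [← ha', ← hb] at hd
    have hpt : ∀ ω, (Δ k ω)^2 = (Ff X ξ ((k+1)^2) ω - Ff X ξ ((k+2)^2) ω)^2 := by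
      intro ω
      have e1 : Δ k ω = Ff X ξ ((k+2)^2) ω - Ff X ξ ((k+1)^2) ω := rfl
      rw [e1]
      ring
    simp only [hpt]
    exact hd
  -- bound on the L¹ norms of increments
  have habs_le : ∀ k, ∫ ω, |Δ k ω| ∂P ≤ Real.sqrt (2/((k:ℝ)+1)^3) := by
    intro k
    have h1 := abs_integral_le_sqrt P (Δ k) (hΔint k) (hΔsq_int k)
    have h2 : ∫ ω, (Δ k ω)^2 ∂P ≤ 2/((k:ℝ)+1)^3 := by
      rw [hΔsq k]
      have hu : (0:ℝ) < (k:ℝ)+1 := by positivity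
      have hv : (0:ℝ) < (k:ℝ)+2 := by positivity
      have hc1 : ((((k+1)^2 : ℕ)):ℝ) = ((k:ℝ)+1)^2 := by push_cast; ring
      have hc2 : ((((k+2)^2 : ℕ)):ℝ) = ((k:ℝ)+2)^2 := by push_cast; ring
      rw [hc1, hc2]
      have hnn : 0 ≤ 1/((k:ℝ)+1)^2 - 1/((k:ℝ)+2)^2 := by
        have h3 : 1/((k:ℝ)+2)^2 ≤ 1/((k:ℝ)+1)^2 :=
          one_div_le_one_div_of_le (by positivity) (by nlinarith)
        linarith
      have hkey : 1/((k:ℝ)+1)^2 - 1/((k:ℝ)+2)^2 ≤ 2/((k:ℝ)+1)^3 := by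
        rw [div_sub_div _ _ (by positivity) (by positivity),
          div_le_div_iff₀ (by positivity) (by positivity)]
        nlinarith
      nlinarith [hba, ha1, hb0]
    calc ∫ ω, |Δ k ω| ∂P ≤ Real.sqrt (∫ ω, (Δ k ω)^2 ∂P) := h1
      _ ≤ Real.sqrt (2/((k:ℝ)+1)^3) := Real.sqrt_le_sqrt h2
  have hsummable : Summable (fun k => ∫ ω, |Δ k ω| ∂P) :=
    Summable.of_nonneg_of_le (fun k => integral_nonneg fun ω => abs_nonneg _)
      habs_le summable_sqrt_cube
  -- a.e. absolute summability of increments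
  have hlint : ∫⁻ ω, (∑' k, ENNReal.ofReal |Δ k ω|) ∂P ≠ ⊤ := by
    rw [lintegral_tsum (fun k => ((hΔmeas k).abs.ennreal_ofReal).aemeasurable)]
    have heach : ∀ k, ∫⁻ ω, ENNReal.ofReal |Δ k ω| ∂P
        = ENNReal.ofReal (∫ ω, |Δ k ω| ∂P) := fun k =>
      (ofReal_integral_eq_lintegral_ofReal (hΔint k).abs
        (Filter.Eventually.of_forall fun ω => abs_nonneg _)).symm
    simp only [heach]
    rw [← ENNReal.ofReal_tsum_of_nonneg
      (fun k => integral_nonneg fun ω => abs_nonneg _) hsummable]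
    exact ENNReal.ofReal_ne_top
  have hae_sum : ∀ᵐ ω ∂P, Summable (fun k => Δ k ω) := by
    have h := ae_lt_top (Measurable.ennreal_tsum
      (fun k => (hΔmeas k).abs.ennreal_ofReal)) hlint
    filter_upwards [h] with ω hω
    apply Summable.of_abs
    have hne : (∑' k, (‖Δ k ω‖₊ : ℝ≥0∞)) ≠ ⊤ := by
      simp only [← enorm_eq_nnnorm, Real.enorm_eq_ofReal_abs]
      exact hω.ne
    have hs : Summable (fun k => ‖Δ k ω‖₊) :=
      ENNReal.tsum_coe_ne_top_iff_summable.mp hne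
    have := NNReal.summable_coe.mpr hs
    simpa [Real.norm_eq_abs] using this
  -- a.e. convergence of the frequencies
  have hae_conv : ∀ᵐ ω ∂P, ∃ ℓ : ℝ, Tendsto (fun n => Ff X ξ n ω) atTop (nhds ℓ) := by
    filter_upwards [hae_sum] with ω hω
    have hsum := hω.hasSum.tendsto_sum_nat
    have hps : ∀ K, ∑ k ∈ Finset.range K, Δ k ω = g K ω - g 0 ω := by
      intro K
      exact Finset.sum_range_sub (fun k => g k ω) K
    have h1 : Tendsto (fun K => g K ω - g 0 ω) atTop (nhds (∑' k, Δ k ω)) :=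
      hsum.congr hps
    have hgK : Tendsto (fun K => g K ω) atTop (nhds ((∑' k, Δ k ω) + g 0 ω)) := by
      have h2 := h1.add_const (g 0 ω)
      simpa using h2
    have hsq : Tendsto (fun k : ℕ => Ff X ξ (k^2) ω) atTop
        (nhds ((∑' k, Δ k ω) + g 0 ω)) := by
      apply (tendsto_add_atTop_iff_nat 1).mp
      exact hgK
    exact ⟨_, tendsto_of_tendsto_sq (fun i => Yf X ξ i ω)
      (fun i => Yf_nonneg X ξ i ω) (fun i => Yf_le_one X ξ i ω) _ hsq⟩
  -- the limit function
  set F : Ω → ℝ := fun ω => Filter.limsup (fun n => Ff X ξ n ω) atTop with hF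
  have hae_tendsF : ∀ᵐ ω ∂P, Tendsto (fun n => Ff X ξ n ω) atTop (nhds (F ω)) := by
    filter_upwards [hae_conv] with ω hω
    obtain ⟨ℓ, hℓ⟩ := hω
    have : F ω = ℓ := hℓ.limsup_eq
    rw [this]
    exact hℓ
  have hFmeas : AEStronglyMeasurable F P :=
    aestronglyMeasurable_of_tendsto_ae atTop
      (fun n => (Ff_meas X ξ hX n).aestronglyMeasurable) hae_tendsF
  have hFint : Integrable F P := by
    apply (integrable_const (1:ℝ)).mono' hFmeas
    filter_upwards [hae_tendsF] with ω hω
    rw [Real.norm_eq_abs, abs_le]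
    constructor
    · exact ge_of_tendsto hω (Filter.Eventually.of_forall fun n => by
        have := Ff_nonneg X ξ n ω; linarith)
    · exact le_of_tendsto hω (Filter.Eventually.of_forall fun n => Ff_le_one X ξ n ω)
  have hint_tend : Tendsto (fun n => ∫ ω, Ff X ξ n ω ∂P) atTop (nhds (∫ ω, F ω ∂P)) := by
    apply tendsto_integral_of_dominated_convergence (fun _ => (1:ℝ))
      (fun n => (Ff_meas X ξ hX n).aestronglyMeasurable) (integrable_const 1)
      (fun n => Filter.Eventually.of_forall fun ω => by
        rw [Real.norm_eq_abs, abs_of_nonneg (Ff_nonneg X ξ n ω)]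
        exact Ff_le_one X ξ n ω)
      hae_tendsF
  have hintF : ∫ ω, F ω ∂P = a := by
    have h1 : Tendsto (fun n : ℕ => ∫ ω, Ff X ξ n ω ∂P) atTop (nhds a) := by
      apply Tendsto.congr' _ (tendsto_const_nhds (x := a))
      filter_upwards [eventually_ge_atTop 1] with n hn
      rw [integral_Ff P X ξ hX hexch n hn, ← ha']
    exact tendsto_nhds_unique hint_tend h1
  -- conclusion by contradiction
  intro hP0
  have hae_not : ∀ᵐ ω ∂P, ¬(∃ L : ℝ,
      Tendsto (fun n : ℕ =>
        (1 / (n : ℝ)) * ((Finset.range n).filter (fun i => X i ω = ξ)).card)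
        atTop (nhds L) ∧ a ≤ L) := by
    rw [ae_iff]
    simpa [not_not] using hP0
  have hcard_eq : ∀ ω, (fun n : ℕ =>
      (1 / (n : ℝ)) * ((Finset.range n).filter (fun i => X i ω = ξ)).card)
      = fun n => Ff X ξ n ω := by
    intro ω
    funext n
    unfold Ff
    congr 1
    rw [Finset.card_filter]
    push_cast
    simp [Yf]
  have hae_lt : ∀ᵐ ω ∂P, F ω < a := by
    filter_upwards [hae_not, hae_tendsF] with ω h1 h2
    by_contra hcon
    push_neg at hcon
    exact h1 ⟨F ω, by rw [hcard_eq ω]; exact h2, hcon⟩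
  have hint0 : ∫ ω, (a - F ω) ∂P = 0 := by
    rw [integral_sub (integrable_const a) hFint, integral_const]
    simp [hintF]
  have hzero : (fun ω => a - F ω) =ᵐ[P] 0 :=
    (integral_eq_zero_iff_of_nonneg_ae
      (by filter_upwards [hae_lt] with ω h; simp; linarith)
      ((integrable_const a).sub hFint)).mp hint0
  have hfalse : ∀ᵐ ω ∂P, False := by
    filter_upwards [hae_lt, hzero] with ω h1 h2
    simp only [Pi.zero_apply] at h2
    linarith
  have hne : (ae P).NeBot := ae_neBot.mpr (IsProbabilityMeasure.ne_zero P)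
  obtain ⟨ω, hω⟩ := hfalse.exists
  exact hω
end
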